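/- Let ξ_1, …, ξ_n ∈ ℝ^d, let Σ̂_υ be a d×d real symmetric positive definite matrix with operator norm s = ‖Σ̂_υ‖, and let λ ≥ 0. Define ξ̃_i = Σ̂_υ^{-1/2} ξ_i, Σ̃ = (1/n) ∑_{i=1}^n ξ̃_i ξ̃_iᵀ, and Σ̂_ξ = (1/n) ∑_{i=1}^n ξ_i ξ_iᵀ. Assume λ_min(Σ̃) ≥ ℓ for some ℓ > 0, and let G be a d×d real symmetric matrix with ‖G‖ ≤ (ℓ + λ/s)/2. Then Σ̂_ξ + λI and Σ̃ + λΣ̂_υ^{-1} + G are invertible and ‖Σ̂_υ^{-1/2} (Σ̃ + λΣ̂_υ^{-1} + G)^{-1} Σ̂_υ^{-1/2} − (Σ̂_ξ + λI)^{-1}‖ ≤ 2‖Σ̂_υ^{-1}‖·‖G‖ / (ℓ² + λ²/s²). (Deterministic core of the original-domain inverse-error bound, Eq. (6) in Theorem 3.4.) -/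

import Mathlib

open Matrix

/-- Operator norm of a square real matrix induced by the Euclidean norm. -/
noncomputable def matOpNorm {d : ℕ} (A : Matrix (Fin d) (Fin d) ℝ) : ℝ :=
  ‖Matrix.toEuclideanCLM (𝕜 := ℝ) A‖

/-- Euclidean norm of a vector in ℝ^d. -/
noncomputable def vnorm {d : ℕ} (v : Fin d → ℝ) : ℝ :=
  Real.sqrt (∑ i, (v i) ^ 2)

/-- Frobenius norm of a square real matrix. -/
noncomputable def frobNorm {d : ℕ} (A : Matrix (Fin d) (Fin d) ℝ) : ℝ :=
  Real.sqrt (∑ i, ∑ j, (A i j) ^ 2)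

/-- Inverse of the (unique symmetric positive definite) square root of a
positive definite matrix: `M^{-1/2}`. -/
noncomputable def pdInvSqrt {d : ℕ} {M : Matrix (Fin d) (Fin d) ℝ} (hM : M.PosDef) :
    Matrix (Fin d) (Fin d) ℝ :=
  (hM.posSemidef.1.eigenvectorUnitary.1 *
      diagonal ((RCLike.ofReal : ℝ → ℝ) ∘ Real.sqrt ∘ hM.posSemidef.1.eigenvalues) *
      (star hM.posSemidef.1.eigenvectorUnitary : Matrix (Fin d) (Fin d) ℝ))⁻¹

/-- Smallest eigenvalue of a real symmetric matrix, via the Rayleigh quotient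
(infimum of `vᵀ A v` over Euclidean-unit vectors `v`). -/
noncomputable def lamMin {d : ℕ} (A : Matrix (Fin d) (Fin d) ℝ) : ℝ :=
  ⨅ v : {v : Fin d → ℝ // ∑ i, (v i) ^ 2 = 1}, dotProduct v.1 (A *ᵥ v.1)

/-- Largest eigenvalue of a real symmetric matrix, via the Rayleigh quotient
(supremum of `vᵀ A v` over Euclidean-unit vectors `v`). -/
noncomputable def lamMax {d : ℕ} (A : Matrix (Fin d) (Fin d) ℝ) : ℝ :=
  ⨆ v : {v : Fin d → ℝ // ∑ i, (v i) ^ 2 = 1}, dotProduct v.1 (A *ᵥ v.1)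

/-- Loewner order on real symmetric matrices: `A ⪯ B` iff `B - A` is positive
semidefinite. -/
def loewnerLE {d : ℕ} (A B : Matrix (Fin d) (Fin d) ℝ) : Prop :=
  (B - A).PosSemidef

namespace S4

variable {d : ℕ}

lemma clm_apply (A : Matrix (Fin d) (Fin d) ℝ) (x : Fin d → ℝ) :
    Matrix.toEuclideanCLM (𝕜 := ℝ) A ((WithLp.equiv 2 (Fin d → ℝ)).symm x) =
      (WithLp.equiv 2 (Fin d → ℝ)).symm (A *ᵥ x) := by
  simp [Matrix.toLin'_apply]

lemma inner_eq (x y : Fin d → ℝ) :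
    (inner ℝ ((WithLp.equiv 2 (Fin d → ℝ)).symm x) ((WithLp.equiv 2 (Fin d → ℝ)).symm y) : ℝ)
      = x ⬝ᵥ y := by
  simp [PiLp.inner_apply, dotProduct, RCLike.inner_apply, mul_comm]

lemma norm_sq_eq (x : Fin d → ℝ) :
    ‖(WithLp.equiv 2 (Fin d → ℝ)).symm x‖ ^ 2 = ∑ i, x i ^ 2 := by
  rw [← real_inner_self_eq_norm_sq, inner_eq]
  simp [dotProduct, pow_two]

lemma matOpNorm_nonneg (A : Matrix (Fin d) (Fin d) ℝ) : 0 ≤ matOpNorm A := norm_nonneg _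

lemma matOpNorm_mul_le (A B : Matrix (Fin d) (Fin d) ℝ) :
    matOpNorm (A * B) ≤ matOpNorm A * matOpNorm B := by
  rw [matOpNorm, _root_.map_mul]
  exact norm_mul_le _ _

lemma matOpNorm_triple (A B C : Matrix (Fin d) (Fin d) ℝ) :
    matOpNorm (A * B * C) ≤ matOpNorm A * matOpNorm B * matOpNorm C :=
  (matOpNorm_mul_le _ _).trans
    (mul_le_mul_of_nonneg_right (matOpNorm_mul_le A B) (matOpNorm_nonneg C))

lemma matOpNorm_neg (A : Matrix (Fin d) (Fin d) ℝ) : matOpNorm (-A) = matOpNorm A := by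
  rw [matOpNorm, map_neg, norm_neg]; rfl

lemma cs_bound (A : Matrix (Fin d) (Fin d) ℝ) (x : Fin d → ℝ) :
    |x ⬝ᵥ (A *ᵥ x)| ≤ matOpNorm A * ∑ i, x i ^ 2 := by
  set X := (WithLp.equiv 2 (Fin d → ℝ)).symm x with hX
  have h1 : x ⬝ᵥ (A *ᵥ x) = (inner ℝ X (Matrix.toEuclideanCLM (𝕜 := ℝ) A X) : ℝ) := by
    rw [hX, clm_apply, inner_eq]
  rw [h1]
  calc |(inner ℝ X (Matrix.toEuclideanCLM (𝕜 := ℝ) A X) : ℝ)|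
      ≤ ‖X‖ * ‖Matrix.toEuclideanCLM (𝕜 := ℝ) A X‖ := abs_real_inner_le_norm _ _
    _ ≤ ‖X‖ * (matOpNorm A * ‖X‖) := by
        gcongr; exact (Matrix.toEuclideanCLM (𝕜 := ℝ) A).le_opNorm X
    _ = matOpNorm A * ∑ i, x i ^ 2 := by rw [← norm_sq_eq x, ← hX]; ring

lemma herm_norm_sq (A : Matrix (Fin d) (Fin d) ℝ) (hA : A.IsHermitian) :
    matOpNorm A ^ 2 = matOpNorm (A * A) := by
  rw [matOpNorm, matOpNorm, _root_.map_mul]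
  have hst : star (Matrix.toEuclideanCLM (𝕜 := ℝ) A) = Matrix.toEuclideanCLM (𝕜 := ℝ) A := by
    rw [← map_star, Matrix.star_eq_conjTranspose, hA.eq]
  calc ‖Matrix.toEuclideanCLM (𝕜 := ℝ) A‖ ^ 2
      = ‖star (Matrix.toEuclideanCLM (𝕜 := ℝ) A) * Matrix.toEuclideanCLM (𝕜 := ℝ) A‖ := by
        rw [pow_two]
        exact (CStarRing.norm_star_mul_self).symm
    _ = ‖Matrix.toEuclideanCLM (𝕜 := ℝ) A * Matrix.toEuclideanCLM (𝕜 := ℝ) A‖ := by rw [hst]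

lemma coercive (A : Matrix (Fin d) (Fin d) ℝ) (hA : A.IsHermitian) (c : ℝ) (hc : 0 < c)
    (h : ∀ x : Fin d → ℝ, c * ∑ i, x i ^ 2 ≤ x ⬝ᵥ (A *ᵥ x)) :
    IsUnit A ∧ matOpNorm A⁻¹ ≤ 1 / c := by
  have hsum : ∀ x : Fin d → ℝ, x ≠ 0 → 0 < ∑ i, x i ^ 2 := by
    intro x hx
    rcases Function.ne_iff.1 hx with ⟨i, hi⟩
    have : 0 < x i ^ 2 := pow_two_pos_of_ne_zero (by simpa using hi)
    exact Finset.sum_pos' (fun j _ => sq_nonneg _) ⟨i, Finset.mem_univ i, this⟩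
  have hpd : A.PosDef := by
    refine Matrix.PosDef.of_dotProduct_mulVec_pos hA fun x hx => ?_
    have h1 := h x
    have h2 := hsum x hx
    have : (0:ℝ) < x ⬝ᵥ (A *ᵥ x) := lt_of_lt_of_le (by positivity) h1
    simpa using this
  refine ⟨hpd.isUnit, ?_⟩
  rw [matOpNorm]
  refine ContinuousLinearMap.opNorm_le_bound _ (by positivity) fun z => ?_
  set y := Matrix.toEuclideanCLM (𝕜 := ℝ) A⁻¹ z with hy
  have hz : Matrix.toEuclideanCLM (𝕜 := ℝ) A y = z := by
    rw [hy, ← ContinuousLinearMap.comp_apply, ← ContinuousLinearMap.mul_def,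
      ← _root_.map_mul, Matrix.mul_nonsing_inv _ (hpd.isUnit.map Matrix.detMonoidHom),
      _root_.map_one, ContinuousLinearMap.one_apply]
  set yv := WithLp.equiv 2 (Fin d → ℝ) y with hyv
  have hyy : y = (WithLp.equiv 2 (Fin d → ℝ)).symm yv := rfl
  have hco : c * ‖y‖ ^ 2 ≤ (inner ℝ y z : ℝ) := by
    have := h yv
    rw [← hz]
    rw [hyy, clm_apply, inner_eq, ← norm_sq_eq yv, ← hyy] at *
    exact this
  have hin : (inner ℝ y z : ℝ) ≤ ‖y‖ * ‖z‖ := real_inner_le_norm _ _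
  have hnn : 0 ≤ ‖y‖ := norm_nonneg _
  rcases eq_or_lt_of_le hnn with h0 | h0
  · rw [← h0]; positivity
  · have : c * ‖y‖ ≤ ‖z‖ := by nlinarith
    rw [div_mul_eq_mul_div, one_mul, le_div_iff₀ hc]
    linarith [mul_comm c ‖y‖]

lemma conj_vecMulVec (Q : Matrix (Fin d) (Fin d) ℝ) (hQ : Qᵀ = Q) (v : Fin d → ℝ) :
    Matrix.vecMulVec (Q *ᵥ v) (Q *ᵥ v) = Q * Matrix.vecMulVec v v * Q := by
  have hrow : Matrix.replicateRow Unit (Q *ᵥ v) = Matrix.replicateRow Unit v * Q := by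
    rw [← Matrix.vecMul_transpose, hQ]
    exact Matrix.replicateRow_vecMul Q v
  rw [Matrix.vecMulVec_eq Unit, Matrix.vecMulVec_eq Unit, Matrix.replicateCol_mulVec, hrow]
  simp [Matrix.mul_assoc]

end S4

set_option maxHeartbeats 1600000

/-- deterministic core of Eq. (6) in Theorem 3.4:
original-domain inverse-error bound after the PMT transformation. -/
theorem stmt4 {d n : ℕ} (hn : 0 < n) (ξ : Fin n → Fin d → ℝ)
    (Sv : Matrix (Fin d) (Fin d) ℝ) (hSv : Sv.PosDef) (lam : ℝ) (hlam : 0 ≤ lam)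
    (G : Matrix (Fin d) (Fin d) ℝ) (hG : G.IsHermitian) (l : ℝ) (hl : 0 < l) :
    let ξt : Fin n → Fin d → ℝ := fun i => pdInvSqrt hSv *ᵥ ξ i
    let St : Matrix (Fin d) (Fin d) ℝ :=
      (1 / (n : ℝ)) • ∑ i, Matrix.vecMulVec (ξt i) (ξt i)
    let Sξ : Matrix (Fin d) (Fin d) ℝ :=
      (1 / (n : ℝ)) • ∑ i, Matrix.vecMulVec (ξ i) (ξ i)
    l ≤ lamMin St → matOpNorm G ≤ (l + lam / matOpNorm Sv) / 2 →
      IsUnit (Sξ + lam • 1) ∧ IsUnit (St + lam • Sv⁻¹ + G) ∧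
        matOpNorm (pdInvSqrt hSv * (St + lam • Sv⁻¹ + G)⁻¹ * pdInvSqrt hSv -
            (Sξ + lam • 1)⁻¹) ≤
          2 * matOpNorm Sv⁻¹ * matOpNorm G / (l ^ 2 + lam ^ 2 / matOpNorm Sv ^ 2) := by
  intro ξt St Sξ hmin hGn
  have hξt_eq : ξt = fun i => pdInvSqrt hSv *ᵥ ξ i := rfl
  have hSt_eq0 : St = (1 / (n : ℝ)) • ∑ i, Matrix.vecMulVec (ξt i) (ξt i) := rfl
  have hSξ_eq : Sξ = (1 / (n : ℝ)) • ∑ i, Matrix.vecMulVec (ξ i) (ξ i) := rfl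
  clear_value ξt St Sξ
  rcases Nat.eq_zero_or_pos d with hd | hd
  · exfalso
    have he : IsEmpty {v : Fin d → ℝ // ∑ i, (v i) ^ 2 = 1} := by
      subst hd
      exact ⟨fun v => by simpa using v.2⟩
    have h0 : lamMin St = 0 := by
      rw [lamMin]
      exact Real.iInf_of_isEmpty _
    rw [h0] at hmin
    linarith
  have i0 : Fin d := ⟨0, hd⟩
  -- square root facts
  obtain ⟨S, hQdef, hSps, hSS⟩ :
      ∃ S : Matrix (Fin d) (Fin d) ℝ, pdInvSqrt hSv = S⁻¹ ∧ S.PosSemidef ∧ S * S = Sv :=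
    by
      refine ⟨_, rfl, ?_, ?_⟩
      · have hdg : (diagonal ((RCLike.ofReal : ℝ → ℝ) ∘ Real.sqrt ∘
            hSv.posSemidef.1.eigenvalues)).PosSemidef :=
          Matrix.posSemidef_diagonal_iff.2 fun i => by simp [Real.sqrt_nonneg]
        have := hdg.mul_mul_conjTranspose_same
          (hSv.posSemidef.1.eigenvectorUnitary : Matrix (Fin d) (Fin d) ℝ)
        simpa [Matrix.star_eq_conjTranspose] using this
      · have hU : (star hSv.posSemidef.1.eigenvectorUnitary : Matrix (Fin d) (Fin d) ℝ) *
            hSv.posSemidef.1.eigenvectorUnitary.1 = 1 :=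
          Matrix.UnitaryGroup.star_mul_self _
        have hspec : Sv = hSv.posSemidef.1.eigenvectorUnitary.1 *
            diagonal ((RCLike.ofReal : ℝ → ℝ) ∘ hSv.posSemidef.1.eigenvalues) *
            (star hSv.posSemidef.1.eigenvectorUnitary : Matrix (Fin d) (Fin d) ℝ) :=
          hSv.posSemidef.1.spectral_theorem
        have hdd : diagonal ((RCLike.ofReal : ℝ → ℝ) ∘ Real.sqrt ∘
              hSv.posSemidef.1.eigenvalues) *
            diagonal ((RCLike.ofReal : ℝ → ℝ) ∘ Real.sqrt ∘ hSv.posSemidef.1.eigenvalues) =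
            diagonal ((RCLike.ofReal : ℝ → ℝ) ∘ hSv.posSemidef.1.eigenvalues) := by
          rw [Matrix.diagonal_mul_diagonal]
          congr 1
          funext i
          simp [Real.mul_self_sqrt (hSv.posSemidef.eigenvalues_nonneg i)]
        conv_rhs => rw [hspec, ← hdd]
        simp only [Matrix.mul_assoc]
        rw [← Matrix.mul_assoc (star _ : Matrix (Fin d) (Fin d) ℝ), hU, Matrix.one_mul]
  have hSdet : IsUnit S.det := by
    have h2 : S.det * S.det = Sv.det := by rw [← Matrix.det_mul, hSS]
    have h3 : S.det ≠ 0 := by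
      intro h
      rw [h, mul_zero] at h2
      exact hSv.det_pos.ne' h2.symm
    exact h3.isUnit
  have hSunit : IsUnit S := (Matrix.isUnit_iff_isUnit_det S).2 hSdet
  have hQherm : (S⁻¹).IsHermitian := hSps.isHermitian.inv
  have hQt : (S⁻¹)ᵀ = S⁻¹ := by
    rw [← Matrix.conjTranspose_eq_transpose_of_trivial, hQherm.eq]
  have hStr : Sᵀ = S := by
    rw [← Matrix.conjTranspose_eq_transpose_of_trivial, hSps.isHermitian.eq]
  have hQS : S⁻¹ * S = 1 := Matrix.nonsing_inv_mul S hSdet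
  have hSQ : S * S⁻¹ = 1 := Matrix.mul_nonsing_inv S hSdet
  have hQQ : S⁻¹ * S⁻¹ = Sv⁻¹ := by rw [← hSS, Matrix.mul_inv_rev]
  set s := matOpNorm Sv with hs_def
  clear_value s
  -- positivity of s
  have hone : (fun _ : Fin d => (1:ℝ)) ≠ 0 := by
    intro h
    have := congrFun h i0
    simpa using this
  have hpos1 : (0:ℝ) < (fun _ : Fin d => (1:ℝ)) ⬝ᵥ (Sv *ᵥ fun _ => (1:ℝ)) := by
    have := hSv.dotProduct_mulVec_pos hone
    simpa using this
  have hs : 0 < s := by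
    rw [hs_def]
    rcases (S4.matOpNorm_nonneg Sv).eq_or_lt with h | h
    · exfalso
      have hcs := S4.cs_bound Sv (fun _ : Fin d => (1:ℝ))
      rw [← h, zero_mul] at hcs
      have hla := le_abs_self ((fun _ : Fin d => (1:ℝ)) ⬝ᵥ (Sv *ᵥ fun _ => (1:ℝ)))
      linarith
    · exact h
  -- dot product of a vector with itself
  have hdotsq : ∀ z : Fin d → ℝ, z ⬝ᵥ z = ∑ i, z i ^ 2 := fun z => by
    simp [dotProduct, pow_two]
  -- coercivity of Sv⁻¹
  have hinv_co : ∀ x : Fin d → ℝ, (1/s) * ∑ i, x i ^ 2 ≤ x ⬝ᵥ (Sv⁻¹ *ᵥ x) := by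
    intro x
    set y := S⁻¹ *ᵥ x with hy
    have hvm : x ᵥ* S⁻¹ = y := by rw [← hQt, Matrix.vecMul_transpose, hy]
    have h1 : x ⬝ᵥ (Sv⁻¹ *ᵥ x) = ∑ i, y i ^ 2 := by
      calc x ⬝ᵥ (Sv⁻¹ *ᵥ x) = x ⬝ᵥ (S⁻¹ *ᵥ y) := by
            rw [hy, Matrix.mulVec_mulVec, hQQ]
        _ = (x ᵥ* S⁻¹) ⬝ᵥ y := Matrix.dotProduct_mulVec _ _ _
        _ = y ⬝ᵥ y := by rw [hvm]
        _ = ∑ i, y i ^ 2 := hdotsq y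
    have h2 : x = S *ᵥ y := by rw [hy, Matrix.mulVec_mulVec, hSQ, Matrix.one_mulVec]
    have hvm2 : y ᵥ* S = S *ᵥ y := by
      conv_lhs => rw [← hStr]
      rw [Matrix.vecMul_transpose]
    have hxx : y ⬝ᵥ (Sv *ᵥ y) = ∑ i, x i ^ 2 := by
      rw [← hSS, ← Matrix.mulVec_mulVec, Matrix.dotProduct_mulVec, hvm2, ← h2, hdotsq]
    have h3 : ∑ i, x i ^ 2 ≤ s * ∑ i, y i ^ 2 := by
      rw [← hxx, hs_def]
      exact le_trans (le_abs_self _) (S4.cs_bound Sv y)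
    rw [h1, div_mul_eq_mul_div, one_mul, div_le_iff₀ hs]
    linarith [h3, mul_comm s (∑ i, y i ^ 2)]
  -- coercivity of St
  have hbdd : BddBelow (Set.range fun v : {v : Fin d → ℝ // ∑ i, (v i) ^ 2 = 1} =>
      dotProduct v.1 (St *ᵥ v.1)) := by
    refine ⟨-(matOpNorm St), ?_⟩
    rintro z ⟨w, rfl⟩
    have hb := S4.cs_bound St w.1
    rw [w.2, mul_one] at hb
    exact neg_le_of_abs_le hb
  have hmin' : l ≤ ⨅ v : {v : Fin d → ℝ // ∑ i, (v i) ^ 2 = 1},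
      dotProduct v.1 (St *ᵥ v.1) := hmin
  have hSt_co : ∀ x : Fin d → ℝ, l * ∑ i, x i ^ 2 ≤ x ⬝ᵥ (St *ᵥ x) := by
    intro x
    rcases eq_or_ne x 0 with rfl | hx
    · simp
    · have hr : 0 < ∑ i, x i ^ 2 := by
        rcases Function.ne_iff.1 hx with ⟨i, hi⟩
        exact Finset.sum_pos' (fun j _ => sq_nonneg _)
          ⟨i, Finset.mem_univ i, pow_two_pos_of_ne_zero (by simpa using hi)⟩
      have hsr : 0 < Real.sqrt (∑ i, x i ^ 2) := Real.sqrt_pos.2 hr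
      set a := (Real.sqrt (∑ i, x i ^ 2))⁻¹ with ha_def
      have ha2 : a ^ 2 = (∑ i, x i ^ 2)⁻¹ := by
        rw [ha_def, inv_pow, Real.sq_sqrt hr.le]
      have hv : ∑ i, (a • x) i ^ 2 = 1 := by
        simp only [Pi.smul_apply, smul_eq_mul, mul_pow, ← Finset.mul_sum]
        rw [ha2, inv_mul_cancel₀ hr.ne']
      have hle := hmin'.trans (ciInf_le hbdd ⟨a • x, hv⟩)
      have heq : (a • x) ⬝ᵥ (St *ᵥ (a • x)) = (∑ i, x i ^ 2)⁻¹ * (x ⬝ᵥ (St *ᵥ x)) := by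
        rw [Matrix.mulVec_smul, smul_dotProduct, dotProduct_smul,
          smul_eq_mul, smul_eq_mul]
        rw [show a * (a * (x ⬝ᵥ (St *ᵥ x))) = a ^ 2 * (x ⬝ᵥ (St *ᵥ x)) by ring, ha2]
      rw [heq] at hle
      have h5 : (∑ i, x i ^ 2)⁻¹ * (x ⬝ᵥ (St *ᵥ x)) * (∑ i, x i ^ 2) = x ⬝ᵥ (St *ᵥ x) := by
        field_simp
      have h6 := mul_le_mul_of_nonneg_right hle hr.le
      linarith
  -- coercivity of G (lower bound)
  have hG_co : ∀ x : Fin d → ℝ, -(matOpNorm G * ∑ i, x i ^ 2) ≤ x ⬝ᵥ (G *ᵥ x) :=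
    fun x => neg_le_of_abs_le (S4.cs_bound G x)
  -- hermitian facts
  have hSt_eq : St = (1/(n:ℝ)) • ∑ i, Matrix.vecMulVec (S⁻¹ *ᵥ ξ i) (S⁻¹ *ᵥ ξ i) := by
    rw [hSt_eq0]
    simp only [hξt_eq, hQdef]
  have hvv : ∀ v : Fin d → ℝ, (Matrix.vecMulVec v v)ᴴ = Matrix.vecMulVec v v := by
    intro v
    ext a b
    simp [Matrix.conjTranspose_apply, Matrix.vecMulVec_apply, mul_comm]
  have hSt_herm : St.IsHermitian := by
    have hh : Stᴴ = St := by
      rw [hSt_eq, Matrix.conjTranspose_smul, Matrix.conjTranspose_sum]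
      simp only [star_trivial]
      congr 1
      exact Finset.sum_congr rfl fun i _ => hvv _
    exact hh
  have hsmulherm : (lam • Sv⁻¹).IsHermitian := by
    have hh : (lam • Sv⁻¹)ᴴ = lam • Sv⁻¹ := by
      rw [Matrix.conjTranspose_smul, hSv.isHermitian.inv.eq]
      simp
    exact hh
  have hB1herm : (St + lam • Sv⁻¹).IsHermitian := hSt_herm.add hsmulherm
  have hB2herm : (St + lam • Sv⁻¹ + G).IsHermitian := hB1herm.add hG
  -- constants
  have hc1 : 0 < l + lam / s := by positivity
  have hc2 : 0 < (l + lam / s) / 2 := by positivity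
  -- coercivity of B1 and B2
  have hco1 : ∀ x : Fin d → ℝ, (l + lam / s) * ∑ i, x i ^ 2 ≤ x ⬝ᵥ ((St + lam • Sv⁻¹) *ᵥ x) := by
    intro x
    have hsplit : x ⬝ᵥ ((St + lam • Sv⁻¹) *ᵥ x)
        = x ⬝ᵥ (St *ᵥ x) + lam * (x ⬝ᵥ (Sv⁻¹ *ᵥ x)) := by
      rw [Matrix.add_mulVec, dotProduct_add]
      congr 1
      rw [Matrix.smul_mulVec, dotProduct_smul, smul_eq_mul]
    rw [hsplit]
    have h1 := hSt_co x
    have h2 := mul_le_mul_of_nonneg_left (hinv_co x) hlam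
    calc (l + lam / s) * ∑ i, x i ^ 2
        = l * ∑ i, x i ^ 2 + lam * ((1/s) * ∑ i, x i ^ 2) := by ring
      _ ≤ x ⬝ᵥ (St *ᵥ x) + lam * (x ⬝ᵥ (Sv⁻¹ *ᵥ x)) := add_le_add h1 h2
  have hco2 : ∀ x : Fin d → ℝ,
      ((l + lam / s) / 2) * ∑ i, x i ^ 2 ≤ x ⬝ᵥ ((St + lam • Sv⁻¹ + G) *ᵥ x) := by
    intro x
    have hsplit : x ⬝ᵥ ((St + lam • Sv⁻¹ + G) *ᵥ x)
        = x ⬝ᵥ ((St + lam • Sv⁻¹) *ᵥ x) + x ⬝ᵥ (G *ᵥ x) := by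
      rw [Matrix.add_mulVec, dotProduct_add]
    rw [hsplit]
    have h1 := hco1 x
    have h2 := hG_co x
    have hsq : (0:ℝ) ≤ ∑ i, x i ^ 2 := Finset.sum_nonneg fun i _ => sq_nonneg _
    have hGS := mul_le_mul_of_nonneg_right hGn hsq
    linarith
  obtain ⟨hB1unit, hB1inv⟩ :=
    S4.coercive (St + lam • Sv⁻¹) hB1herm (l + lam / s) hc1 hco1
  obtain ⟨hB2unit, hB2inv⟩ :=
    S4.coercive (St + lam • Sv⁻¹ + G) hB2herm ((l + lam / s) / 2) hc2 hco2
  -- the key identity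
  have h1 : S * St * S = Sξ := by
    rw [hSt_eq, hSξ_eq, mul_smul_comm, smul_mul_assoc]
    congr 1
    rw [Finset.mul_sum, Finset.sum_mul]
    refine Finset.sum_congr rfl fun i _ => ?_
    rw [S4.conj_vecMulVec S⁻¹ hQt (ξ i)]
    have hassoc : S * (S⁻¹ * Matrix.vecMulVec (ξ i) (ξ i) * S⁻¹) * S
        = (S * S⁻¹) * Matrix.vecMulVec (ξ i) (ξ i) * (S⁻¹ * S) := by
      noncomm_ring
    rw [hassoc, hSQ, hQS, Matrix.one_mul, Matrix.mul_one]
  have h2 : S * (lam • Sv⁻¹) * S = lam • (1 : Matrix (Fin d) (Fin d) ℝ) := by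
    rw [mul_smul_comm, smul_mul_assoc]
    congr 1
    rw [← hQQ]
    have hassoc : S * (S⁻¹ * S⁻¹) * S = (S * S⁻¹) * (S⁻¹ * S) := by noncomm_ring
    rw [hassoc, hSQ, hQS, Matrix.one_mul]
  have hkey : Sξ + lam • (1 : Matrix (Fin d) (Fin d) ℝ) = S * (St + lam • Sv⁻¹) * S := by
    rw [Matrix.mul_add, Matrix.add_mul, h1, h2]
  have hSξunit : IsUnit (Sξ + lam • (1 : Matrix (Fin d) (Fin d) ℝ)) := by
    rw [hkey]
    exact (hSunit.mul hB1unit).mul hSunit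
  refine ⟨hSξunit, hB2unit, ?_⟩
  rw [hQdef]
  have hinv1 : (Sξ + lam • (1 : Matrix (Fin d) (Fin d) ℝ))⁻¹
      = S⁻¹ * (St + lam • Sv⁻¹)⁻¹ * S⁻¹ := by
    rw [hkey, Matrix.mul_inv_rev, Matrix.mul_inv_rev, ← Matrix.mul_assoc]
  rw [hinv1]
  -- difference identity
  have e2 : (St + lam • Sv⁻¹ + G)⁻¹ * (St + lam • Sv⁻¹ + G) = 1 :=
    Matrix.nonsing_inv_mul _ ((Matrix.isUnit_iff_isUnit_det _).1 hB2unit)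
  have e1 : (St + lam • Sv⁻¹) * (St + lam • Sv⁻¹)⁻¹ = 1 :=
    Matrix.mul_nonsing_inv _ ((Matrix.isUnit_iff_isUnit_det _).1 hB1unit)
  have e3 : (St + lam • Sv⁻¹ + G)⁻¹ - (St + lam • Sv⁻¹)⁻¹
      = -((St + lam • Sv⁻¹ + G)⁻¹ * G * (St + lam • Sv⁻¹)⁻¹) := by
    calc (St + lam • Sv⁻¹ + G)⁻¹ - (St + lam • Sv⁻¹)⁻¹
        = (St + lam • Sv⁻¹ + G)⁻¹ * ((St + lam • Sv⁻¹) * (St + lam • Sv⁻¹)⁻¹)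
          - ((St + lam • Sv⁻¹ + G)⁻¹ * (St + lam • Sv⁻¹ + G)) * (St + lam • Sv⁻¹)⁻¹ := by
          rw [e1, e2, Matrix.mul_one, Matrix.one_mul]
      _ = -((St + lam • Sv⁻¹ + G)⁻¹ * G * (St + lam • Sv⁻¹)⁻¹) := by noncomm_ring
  have hdiff : S⁻¹ * (St + lam • Sv⁻¹ + G)⁻¹ * S⁻¹ - S⁻¹ * (St + lam • Sv⁻¹)⁻¹ * S⁻¹
      = -(S⁻¹ * ((St + lam • Sv⁻¹ + G)⁻¹ * G * (St + lam • Sv⁻¹)⁻¹) * S⁻¹) := by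
    have h4 : S⁻¹ * (St + lam • Sv⁻¹ + G)⁻¹ * S⁻¹ - S⁻¹ * (St + lam • Sv⁻¹)⁻¹ * S⁻¹
        = S⁻¹ * ((St + lam • Sv⁻¹ + G)⁻¹ - (St + lam • Sv⁻¹)⁻¹) * S⁻¹ := by noncomm_ring
    rw [h4, e3]
    noncomm_ring
  rw [hdiff, S4.matOpNorm_neg]
  -- norm chain
  have hq2 : matOpNorm (S⁻¹) ^ 2 = matOpNorm Sv⁻¹ := by
    rw [S4.herm_norm_sq _ hQherm, hQQ]
  have hchain : matOpNorm (S⁻¹ * ((St + lam • Sv⁻¹ + G)⁻¹ * G * (St + lam • Sv⁻¹)⁻¹) * S⁻¹)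
      ≤ matOpNorm Sv⁻¹ *
        ((1 / ((l + lam / s) / 2)) * matOpNorm G * (1 / (l + lam / s))) := by
    have t1 := S4.matOpNorm_triple (S⁻¹) ((St + lam • Sv⁻¹ + G)⁻¹ * G * (St + lam • Sv⁻¹)⁻¹) (S⁻¹)
    have t2 := S4.matOpNorm_triple ((St + lam • Sv⁻¹ + G)⁻¹) G ((St + lam • Sv⁻¹)⁻¹)
    have hn1 := S4.matOpNorm_nonneg (S⁻¹)
    have hn2 := S4.matOpNorm_nonneg ((St + lam • Sv⁻¹ + G)⁻¹ * G * (St + lam • Sv⁻¹)⁻¹)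
    have hn3 := S4.matOpNorm_nonneg ((St + lam • Sv⁻¹ + G)⁻¹)
    have hn4 := S4.matOpNorm_nonneg G
    have hn5 := S4.matOpNorm_nonneg ((St + lam • Sv⁻¹)⁻¹)
    have hstep : matOpNorm (S⁻¹ * ((St + lam • Sv⁻¹ + G)⁻¹ * G * (St + lam • Sv⁻¹)⁻¹) * S⁻¹)
        ≤ matOpNorm (S⁻¹) ^ 2 *
          (matOpNorm ((St + lam • Sv⁻¹ + G)⁻¹) * matOpNorm G * matOpNorm ((St + lam • Sv⁻¹)⁻¹)) := by
      refine t1.trans ?_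
      have step2 := mul_le_mul_of_nonneg_right (mul_le_mul_of_nonneg_left t2 hn1) hn1
      refine step2.trans_eq ?_
      ring
    rw [hq2] at hstep
    refine hstep.trans ?_
    have hmono : matOpNorm ((St + lam • Sv⁻¹ + G)⁻¹) * matOpNorm G * matOpNorm ((St + lam • Sv⁻¹)⁻¹)
        ≤ (1 / ((l + lam / s) / 2)) * matOpNorm G * (1 / (l + lam / s)) := by
      have hp1 : (0:ℝ) ≤ 1 / ((l + lam / s) / 2) := by positivity
      have m1 := mul_le_mul_of_nonneg_right hB2inv hn4
      have m2 := mul_le_mul_of_nonneg_right m1 hn5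
      have m3 := mul_le_mul_of_nonneg_left hB1inv (mul_nonneg hp1 hn4)
      exact m2.trans m3
    exact mul_le_mul_of_nonneg_left hmono (S4.matOpNorm_nonneg Sv⁻¹)
  refine hchain.trans ?_
  -- final numeric inequality
  have ht : 0 < l ^ 2 + lam ^ 2 / s ^ 2 := by positivity
  have ht2 : l ^ 2 + lam ^ 2 / s ^ 2 ≤ (l + lam / s) ^ 2 := by
    have h7 : lam ^ 2 / s ^ 2 = (lam / s) ^ 2 := by rw [div_pow]
    nlinarith [mul_nonneg hl.le (div_nonneg hlam hs.le)]
  have heqv : matOpNorm Sv⁻¹ * ((1 / ((l + lam / s) / 2)) * matOpNorm G * (1 / (l + lam / s)))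
      = 2 * matOpNorm Sv⁻¹ * matOpNorm G / (l + lam / s) ^ 2 := by
    field_simp
  have hnum : (0:ℝ) ≤ 2 * matOpNorm Sv⁻¹ * matOpNorm G := by
    have h8 := S4.matOpNorm_nonneg Sv⁻¹
    have h9 := S4.matOpNorm_nonneg G
    positivity
  exact heqv.trans_le (div_le_div_of_nonneg_left hnum ht ht2)
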